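/- Let G be a group acting transitively on a set S (MulAction with IsPretransitive), and let p ∈ S. Then S admits a G-invariant equivalence relation other than the two trivial ones (the equality relation and the all relation) if and only if the stabilizer subgroup Stab(p) is not maximal in G, i.e. there exists a subgroup H of G with Stab(p) < H and H ≠ G (strict inclusions). Here an equivalence relation r on S is G-invariant if r x y implies r (g•x) (g•y) for all g ∈ G. -/

import Mathlib

open MulAction Set Pointwise

/-- For a transitive group action of `G` on `S`, there exists a `G`-invariant
equivalence relation on `S` other than the two trivial ones iff the stabilizer
of a point is not a maximal subgroup of `G`. -/
theorem invariant_equivalence_iff_stabilizer_not_maximal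
    {G : Type*} [Group G] {S : Type*} [MulAction G S]
    [MulAction.IsPretransitive G S] (p : S) :
    (∃ r : Setoid S, (∀ (g : G) (x y : S), r.r x y → r.r (g • x) (g • y)) ∧
      r ≠ ⊥ ∧ r ≠ ⊤) ↔
    ∃ H : Subgroup G, MulAction.stabilizer G p < H ∧ H ≠ ⊤ := by
  constructor
  · rintro ⟨r, hinv, hbot, htop⟩
    -- B : the equivalence class of p
    set B : Set S := {x | r.r p x} with hBdef
    -- translates of B are classes
    have hsmul : ∀ (g : G) (y : S), y ∈ g • B ↔ r.r (g • p) y := by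
      intro g y
      rw [Set.mem_smul_set_iff_inv_smul_mem]
      constructor
      · intro h
        have := hinv g _ _ h
        simpa using this
      · intro h
        have := hinv g⁻¹ _ _ h
        exact (by simpa using this : r.r p (g⁻¹ • y))
    refine ⟨MulAction.stabilizer G B, ?_, ?_⟩
    · -- obtain q ≠ p with r.r p q
      obtain ⟨x, y, hxy, hne⟩ : ∃ x y, r.r x y ∧ x ≠ y := by
        by_contra h
        push_neg at h
        apply hbot
        apply Setoid.ext
        intro a b
        simp only [Setoid.bot_def]
        exact ⟨fun hab => h a b hab, fun hab => hab ▸ r.refl a⟩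
      obtain ⟨g, hg⟩ := MulAction.exists_smul_eq G x p
      have hq : r.r p (g • y) := hg ▸ hinv g _ _ hxy
      have hqne : g • y ≠ p := by
        intro h
        exact hne (smul_left_cancel g (hg.trans h.symm))
      -- classes through any point: key class equality
      have classeq : ∀ g : G, r.r p (g • p) → g • B = B := by
        intro g hgp
        ext y
        rw [hsmul]
        constructor
        · exact fun h => r.trans hgp h
        · exact fun h => r.trans (r.symm hgp) h
      constructor
      · intro g hg'
        have : g • p = p := hg'
        simp only [SetLike.mem_coe, MulAction.mem_stabilizer_iff]
        refine classeq g ?_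
        rw [this]
      · intro hle
        obtain ⟨k, hk⟩ := MulAction.exists_smul_eq G p (g • y)
        have hkB : k ∈ MulAction.stabilizer G B := classeq k (hk ▸ hq)
        have h2 : k • p = p := hle hkB
        exact hqne (hk ▸ h2)
    · -- stabilizer of B is not ⊤
      intro h
      apply htop
      apply Setoid.ext
      intro a b
      simp only [Setoid.top_def, Pi.top_apply, Prop.top_eq_true, iff_true]
      have key : ∀ x : S, r.r x p := by
        intro x
        obtain ⟨g, hg⟩ := MulAction.exists_smul_eq G p x
        have hgB : g • B = B := by
          have : g ∈ MulAction.stabilizer G B := h ▸ Subgroup.mem_top g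
          exact this
        have : p ∈ g • B := hgB.symm ▸ (r.refl p : p ∈ B)
        rw [hsmul, hg] at this
        exact this
      exact r.trans (key a) (r.symm (key b))
  · rintro ⟨H, hlt, hne⟩
    set B : Set S := MulAction.orbit H p with hBdef
    have hB : MulAction.IsBlock G B := MulAction.IsBlock.of_orbit hlt.le
    have hpB : p ∈ B := MulAction.mem_orbit_self p
    -- the relation : x ~ y iff they lie in a common translate of B
    refine ⟨⟨fun x y => ∃ g : G, x ∈ g • B ∧ y ∈ g • B, ?_, ?_, ?_⟩, ?_, ?_, ?_⟩
    · intro x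
      obtain ⟨g, hg⟩ := MulAction.exists_smul_eq G p x
      exact ⟨g, hg ▸ Set.smul_mem_smul_set hpB, hg ▸ Set.smul_mem_smul_set hpB⟩
    · rintro x y ⟨g, h1, h2⟩; exact ⟨g, h2, h1⟩
    · rintro x y z ⟨g, h1, h2⟩ ⟨g', h3, h4⟩
      have : g • B = g' • B := by
        rcases MulAction.isBlock_iff_smul_eq_smul_or_disjoint.mp hB g g' with h | h
        · exact h
        · exact absurd (Set.not_disjoint_iff.mpr ⟨y, h2, h3⟩) (by simpa using h)
      exact ⟨g, h1, this ▸ h4⟩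
    · rintro g x y ⟨k, h1, h2⟩
      refine ⟨g * k, ?_, ?_⟩ <;> rw [mul_smul] <;> exact Set.smul_mem_smul_set ‹_›
    · -- not ⊥ : there is h ∈ H \ stabilizer p, giving h • p ∈ B, h • p ≠ p
      obtain ⟨h, hH, hnot⟩ := SetLike.exists_of_lt hlt
      intro hbot
      have hrel : (⊥ : Setoid S).r p (h • p) := by
        rw [← hbot]
        have hmem : h • p ∈ B := ⟨⟨h, hH⟩, rfl⟩
        exact ⟨1, by simpa using hpB, by simpa using hmem⟩
      rw [Setoid.bot_def] at hrel
      exact hnot (by rw [MulAction.mem_stabilizer_iff, ← hrel])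
    · -- not ⊤ : B ≠ univ since stabilizer G B = H ≠ ⊤
      intro htop
      have hBne : B ≠ Set.univ := by
        intro h
        apply hne
        have := MulAction.stabilizer_orbit_eq hlt.le
        rw [← hBdef, h] at this
        rw [← this]
        ext g
        simp [MulAction.mem_stabilizer_iff]
      obtain ⟨q, hq⟩ := (Set.ne_univ_iff_exists_notMem B).mp hBne
      have hrel : (⊤ : Setoid S).r p q := by simp [Setoid.top_def]
      rw [← htop] at hrel
      obtain ⟨g, h1, h2⟩ := hrel
      have : g • B = B := by
        rcases MulAction.isBlock_iff_smul_eq_smul_or_disjoint.mp hB g 1 with h | h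
        · simpa using h
        · exact absurd (Set.not_disjoint_iff.mpr ⟨p, h1, by simpa using hpB⟩) (by simpa using h)
      exact hq (this ▸ h2)
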